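/- arXiv:2004.07605 — 3 statements merged into one kernel-verified Lean document; each statement's English description precedes it below -/
import Mathlib

section
/- Margin form of the C-bound: if the first margin moment is positive, μ₁(M_Q^D) > 0, then the risk of the Q-weighted majority vote satisfies R_D(B_Q) ≤ 1 - (μ₁(M_Q^D))² / μ₂(M_Q^D), where μ₁(M_Q^D) and μ₂(M_Q^D) are the first and second D-moments of the margin (note μ₂ ≥ μ₁² > 0, so the right-hand side is well defined). -/
open MeasureTheory

/-- Margin form of the C-bound: if the first margin moment `μ₁(M_Q^D)` is positive,
then the risk of the `Q`-weighted majority vote (ties counted as errors) satisfies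
`R_D(B_Q) ≤ 1 - μ₁² / μ₂`. -/
theorem cBound_margin_form {X H : Type*} [MeasurableSpace X] [MeasurableSpace H]
    (D : Measure (X × ℝ)) [IsProbabilityMeasure D]
    (hD : ∀ᵐ p ∂D, p.2 = 1 ∨ p.2 = -1)
    (ev : H × X → ℝ) (hev_meas : Measurable ev)
    (hev : ∀ h x, ev (h, x) = 1 ∨ ev (h, x) = -1)
    (Q : Measure H) [IsProbabilityMeasure Q]
    (hμ₁ : 0 < ∫ p, ∫ h, p.2 * ev (h, p.1) ∂Q ∂D) :
    (D {p | p.2 * ∫ h, ev (h, p.1) ∂Q ≤ 0}).toReal ≤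
      1 - (∫ p, ∫ h, p.2 * ev (h, p.1) ∂Q ∂D) ^ 2 /
        ∫ p, (∫ h, p.2 * ev (h, p.1) ∂Q) ^ 2 ∂D := by
  -- The averaged vote function
  set g : X → ℝ := fun x => ∫ h, ev (h, x) ∂Q with hg_def
  have hg_meas : StronglyMeasurable g :=
    hev_meas.stronglyMeasurable.integral_prod_left'
  have hg_bd : ∀ x, |g x| ≤ 1 := by
    intro x
    rw [← Real.norm_eq_abs]
    calc ‖∫ h, ev (h, x) ∂Q‖ ≤ 1 * (Q Set.univ).toReal := by
          refine norm_integral_le_of_norm_le_const ?_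
          filter_upwards with h
          rcases hev h x with h1 | h1 <;> simp [h1]
      _ = 1 := by simp
  -- The margin function
  set M : X × ℝ → ℝ := fun p => p.2 * g p.1 with hM_def
  have hM_meas : Measurable M :=
    measurable_snd.mul (hg_meas.measurable.comp measurable_fst)
  have hM_bd : ∀ᵐ p ∂D, |M p| ≤ 1 := by
    filter_upwards [hD] with p hp
    have := hg_bd p.1
    rcases hp with h1 | h1 <;> simp [hM_def, h1, abs_mul] <;>
      simpa [abs_of_nonneg, abs_neg] using this
  -- rewrite the integrals in terms of M
  have hrw : ∀ p : X × ℝ, (∫ h, p.2 * ev (h, p.1) ∂Q) = M p := by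
    intro p
    simp [hM_def, hg_def, integral_const_mul]
  simp_rw [hrw] at hμ₁ ⊢
  -- integrability
  have hM_int : Integrable M D := by
    refine (integrable_const (1 : ℝ)).mono' hM_meas.aestronglyMeasurable ?_
    filter_upwards [hM_bd] with p hp
    simpa [Real.norm_eq_abs] using hp
  have hM2_int : Integrable (fun p => (M p) ^ 2) D := by
    refine (integrable_const (1 : ℝ)).mono' (hM_meas.pow_const 2).aestronglyMeasurable ?_
    filter_upwards [hM_bd] with p hp
    rw [Real.norm_eq_abs, abs_pow]
    nlinarith [abs_nonneg (M p)]
  set a : ℝ := ∫ p, M p ∂D with ha_def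
  set b : ℝ := ∫ p, (M p) ^ 2 ∂D with hb_def
  have hb_nonneg : 0 ≤ b := integral_nonneg fun p => sq_nonneg _
  -- the set where the vote errs
  set A : Set (X × ℝ) := {p | M p ≤ 0} with hA_def
  have hA_meas : MeasurableSet A := measurableSet_le hM_meas measurable_const
  set c : ℝ := (D Aᶜ).toReal with hc_def
  have hc_nonneg : 0 ≤ c := ENNReal.toReal_nonneg
  have hsum : (D A).toReal = 1 - c := by
    have : D A + D Aᶜ = 1 := by
      rw [measure_add_measure_compl hA_meas, measure_univ]
    have hA_fin : D A ≠ ⊤ := measure_ne_top D A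
    have hAc_fin : D Aᶜ ≠ ⊤ := measure_ne_top D Aᶜ
    have := congrArg ENNReal.toReal this
    rw [ENNReal.toReal_add hA_fin hAc_fin] at this
    simp at this
    linarith [this]
  -- key inequality: for every s > 0, a ≤ s/2 * b + 1/(2s) * c
  have key : ∀ s : ℝ, 0 < s → a ≤ s / 2 * b + 1 / (2 * s) * c := by
    intro s hs
    have hind_int : Integrable (fun p => (1 / (2 * s)) * Aᶜ.indicator (1 : X × ℝ → ℝ) p) D :=
      ((integrable_const (1 : ℝ)).indicator hA_meas.compl).const_mul _
    have hrhs_int : Integrable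
        (fun p => s / 2 * (M p) ^ 2 + (1 / (2 * s)) * Aᶜ.indicator (1 : X × ℝ → ℝ) p) D :=
      (hM2_int.const_mul _).add hind_int
    have hmono : ∀ p, M p ≤ s / 2 * (M p) ^ 2 + (1 / (2 * s)) * Aᶜ.indicator (1 : X × ℝ → ℝ) p := by
      intro p
      by_cases hp : M p ≤ 0
      · have : Aᶜ.indicator (1 : X × ℝ → ℝ) p = 0 ∨ Aᶜ.indicator (1 : X × ℝ → ℝ) p = 1 := by
          by_cases hmem : p ∈ Aᶜ <;> simp [hmem]
        have h1 : (0:ℝ) < 1 / (2 * s) := by positivity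
        rcases this with h0 | h0 <;> rw [h0] <;> nlinarith [sq_nonneg (M p)]
      · have hmem : p ∈ Aᶜ := by simpa [hA_def] using hp
        rw [Set.indicator_of_mem hmem]
        simp only [Pi.one_apply, mul_one]
        have key2 : s / 2 * M p ^ 2 + 1 / (2 * s) - M p = (s * M p - 1) ^ 2 / (2 * s) := by
          field_simp; ring
        nlinarith [div_nonneg (sq_nonneg (s * M p - 1)) (by positivity : (0:ℝ) ≤ 2 * s), key2]
    calc a ≤ ∫ p, (s / 2 * (M p) ^ 2 + (1 / (2 * s)) * Aᶜ.indicator (1 : X × ℝ → ℝ) p) ∂D :=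
          integral_mono hM_int hrhs_int hmono
      _ = s / 2 * b + 1 / (2 * s) * c := by
          rw [integral_add (hM2_int.const_mul _) hind_int, integral_const_mul, integral_const_mul,
            integral_indicator_one hA_meas.compl]
          rfl
  -- derive b > 0
  have hb_pos : 0 < b := by
    by_contra hb
    push_neg at hb
    have hb0 : b = 0 := le_antisymm hb hb_nonneg
    by_cases hc0 : c = 0
    · have := key 1 one_pos
      rw [hb0, hc0] at this
      linarith
    · have hcpos : 0 < c := lt_of_le_of_ne hc_nonneg (Ne.symm hc0)
      have := key (c / a) (by positivity)
      rw [hb0] at this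
      have h2 : 1 / (2 * (c / a)) * c = a / 2 := by
        field_simp
      rw [h2] at this
      linarith
  -- derive c > 0
  have hc_pos : 0 < c := by
    by_contra hc
    push_neg at hc
    have hc0 : c = 0 := le_antisymm hc hc_nonneg
    have := key (a / b) (by positivity)
    rw [hc0] at this
    have h2 : a / b / 2 * b = a / 2 := by field_simp
    rw [mul_zero, add_zero, h2] at this
    linarith
  -- a² ≤ b * c via optimal s
  have habc : a ^ 2 ≤ b * c := by
    set s : ℝ := Real.sqrt (c / b) with hs_def
    have hs_pos : 0 < s := Real.sqrt_pos.mpr (by positivity)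
    have hs_sq : s ^ 2 = c / b := Real.sq_sqrt (by positivity)
    have hsb : s ^ 2 * b = c := by rw [hs_sq]; field_simp
    have hkey := key s hs_pos
    have hab : a ≤ s * b := by
      have h1 : 1 / (2 * s) * c = s * b / 2 := by
        rw [← hsb]; field_simp
      rw [h1] at hkey
      linarith
    calc a ^ 2 ≤ (s * b) ^ 2 := by nlinarith [hμ₁]
      _ = s ^ 2 * b * b := by ring
      _ = c * b := by rw [hsb]
      _ = b * c := mul_comm _ _
  -- conclude
  rw [hsum]
  have : a ^ 2 / b ≤ c := (div_le_iff₀ hb_pos).mpr (by linarith [mul_comm b c, habc])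
  linarith
end

section
/- PAC-Bayesian C-bound: if the Gibbs risk satisfies R_D(G_Q) < 1/2, then the expected disagreement satisfies d_D(Q) < 1/2 and the risk of the Q-weighted majority vote satisfies R_D(B_Q) ≤ 1 - (1 - 2·R_D(G_Q))² / (1 - 2·d_D(Q)). -/
open MeasureTheory

lemma aux_sq_integral_le {α : Type*} [MeasurableSpace α] (D : Measure α)
    [IsProbabilityMeasure D] (M : α → ℝ) (intM : Integrable M D)
    (intM2 : Integrable (fun p => M p ^ 2) D) :
    (∫ p, M p ∂D) ^ 2 ≤ ∫ p, M p ^ 2 ∂D := by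
  set μ := ∫ p, M p ∂D with hμ
  have h0 : 0 ≤ ∫ p, (M p - μ) ^ 2 ∂D := integral_nonneg fun p => sq_nonneg _
  have he : ∫ p, (M p - μ) ^ 2 ∂D = (∫ p, M p ^ 2 ∂D) - 2 * μ * μ + μ ^ 2 := by
    have h1 : (fun p => (M p - μ) ^ 2) = fun p => (M p ^ 2 - M p * (2 * μ)) + μ ^ 2 := by
      funext p; ring
    have i1 : Integrable (fun p => M p * (2 * μ)) D := intM.mul_const _
    have i2 : Integrable (fun p => M p ^ 2 - M p * (2 * μ)) D := intM2.sub i1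
    rw [h1, integral_add i2 (integrable_const _),
        integral_sub intM2 i1, integral_mul_const, integral_const]
    simp [← hμ]
    ring
  nlinarith

lemma aux_cantelli {α : Type*} [MeasurableSpace α] (D : Measure α) [IsProbabilityMeasure D]
    (M : α → ℝ) (hM : Measurable M) (intM : Integrable M D)
    (intM2 : Integrable (fun p => M p ^ 2) D) (μ S : ℝ)
    (hμ : ∫ p, M p ∂D = μ) (hS : ∫ p, M p ^ 2 ∂D = S)
    (hμpos : 0 < μ) (hSpos : 0 < S) :
    (D {p | M p ≤ 0}).toReal ≤ 1 - μ ^ 2 / S := by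
  have hs_meas : MeasurableSet {p | M p ≤ 0} := measurableSet_le hM measurable_const
  obtain ⟨A, hA⟩ : ∃ a : ℝ, a = (μ / S) ^ 2 * (S / μ) ^ 2 := ⟨_, rfl⟩
  obtain ⟨B, hB⟩ : ∃ b : ℝ, b = 2 * (μ / S) ^ 2 * (S / μ) := ⟨_, rfl⟩
  obtain ⟨C, hC⟩ : ∃ c : ℝ, c = (μ / S) ^ 2 := ⟨_, rfl⟩
  have hg_eq : ∀ p, (A - M p * B) + M p ^ 2 * C = ((S / μ - M p) * (μ / S)) ^ 2 := by
    intro p; rw [hA, hB, hC]; ring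
  have iB : Integrable (fun p => M p * B) D := intM.mul_const B
  have iC : Integrable (fun p => M p ^ 2 * C) D := intM2.mul_const C
  have iAB : Integrable (fun p => A - M p * B) D := (integrable_const A).sub iB
  have int_g : Integrable (fun p => (A - M p * B) + M p ^ 2 * C) D := iAB.add iC
  have hpt : ∀ p, Set.indicator {p | M p ≤ 0} (fun _ => (1 : ℝ)) p ≤
      (A - M p * B) + M p ^ 2 * C := by
    intro p
    rw [hg_eq p]
    by_cases hp : M p ≤ 0
    · rw [Set.indicator_of_mem (show p ∈ {q | M q ≤ 0} from hp)]
      have hinv : (S / μ) * (μ / S) = 1 := by field_simp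
      have hk : 0 < μ / S := div_pos hμpos hSpos
      have hc : 0 < S / μ := div_pos hSpos hμpos
      have e1 : (1 : ℝ) ≤ (S / μ - M p) * (μ / S) := by nlinarith
      nlinarith
    · rw [Set.indicator_of_notMem (show p ∉ {q | M q ≤ 0} from hp)]
      positivity
  have h1 : (D {p | M p ≤ 0}).toReal
      = ∫ p, Set.indicator {p | M p ≤ 0} (fun _ => (1 : ℝ)) p ∂D := by
    rw [integral_indicator_const (1 : ℝ) hs_meas]; simp; rfl
  have h2 : ∫ p, ((A - M p * B) + M p ^ 2 * C) ∂D = 1 - μ ^ 2 / S := by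
    rw [integral_add iAB iC, integral_sub (integrable_const A) iB, integral_mul_const,
        integral_mul_const, integral_const, hμ, hS]
    simp only [probReal_univ, smul_eq_mul, one_mul]
    rw [hA, hB, hC]
    field_simp
    ring
  rw [h1]
  calc ∫ p, Set.indicator {p | M p ≤ 0} (fun _ => (1 : ℝ)) p ∂D
      ≤ ∫ p, ((A - M p * B) + M p ^ 2 * C) ∂D :=
        integral_mono ((integrable_const (1 : ℝ)).indicator hs_meas) int_g hpt
    _ = 1 - μ ^ 2 / S := h2

/-- PAC-Bayesian C-bound: if the Gibbs risk `R_D(G_Q) < 1/2`, then the expected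
disagreement satisfies `d_D(Q) < 1/2` and the risk of the `Q`-weighted majority vote
(ties counted as errors) satisfies
`R_D(B_Q) ≤ 1 - (1 - 2 R_D(G_Q))² / (1 - 2 d_D(Q))`. -/
theorem pac_bayes_cBound {X H : Type*} [MeasurableSpace X] [MeasurableSpace H]
    (D : Measure (X × ℝ)) [IsProbabilityMeasure D]
    (hD : ∀ᵐ p ∂D, p.2 = 1 ∨ p.2 = -1)
    (ev : H × X → ℝ) (hev_meas : Measurable ev)
    (hev : ∀ h x, ev (h, x) = 1 ∨ ev (h, x) = -1)
    (Q : Measure H) [IsProbabilityMeasure Q]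
    (hGibbs : ∫ p, ∫ h, (if ev (h, p.1) ≠ p.2 then (1 : ℝ) else 0) ∂Q ∂D < 1 / 2) :
    ∫ p, ∫ h', ∫ h, (if ev (h, p.1) ≠ ev (h', p.1) then (1 : ℝ) else 0) ∂Q ∂Q ∂D < 1 / 2 ∧
    (D {p | p.2 * ∫ h, ev (h, p.1) ∂Q ≤ 0}).toReal ≤
      1 - (1 - 2 * ∫ p, ∫ h, (if ev (h, p.1) ≠ p.2 then (1 : ℝ) else 0) ∂Q ∂D) ^ 2 /
        (1 - 2 * ∫ p, ∫ h', ∫ h, (if ev (h, p.1) ≠ ev (h', p.1) then (1 : ℝ) else 0) ∂Q ∂Q ∂D) := by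
  classical
  -- basic boundedness facts
  have hev_norm : ∀ h x, ‖ev (h, x)‖ ≤ 1 := by
    intro h x; rcases hev h x with h1 | h1 <;> simp [h1]
  have int_ev : ∀ x : X, Integrable (fun h => ev (h, x)) Q := by
    intro x
    refine (integrable_const (1 : ℝ)).mono'
      ((hev_meas.comp (measurable_id.prodMk measurable_const)).aestronglyMeasurable) ?_
    exact Filter.Eventually.of_forall fun h => by simpa using hev_norm h x
  have hf_sm : StronglyMeasurable (fun x : X => ∫ h, ev (h, x) ∂Q) :=
    hev_meas.stronglyMeasurable.integral_prod_left'
  have hf_abs : ∀ x : X, ‖∫ h, ev (h, x) ∂Q‖ ≤ 1 := by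
    intro x
    have := norm_integral_le_of_norm_le_const (μ := Q) (f := fun h => ev (h, x))
      (Filter.Eventually.of_forall fun h => hev_norm h x)
    simpa using this
  -- inner integral formula
  have key : ∀ (x : X) (c : ℝ), c = 1 ∨ c = -1 →
      (∫ h, (if ev (h, x) ≠ c then (1 : ℝ) else 0) ∂Q)
        = (1 - c * ∫ h, ev (h, x) ∂Q) / 2 := by
    intro x c hc
    have he : (fun h => (if ev (h, x) ≠ c then (1 : ℝ) else 0))
        = fun h => (1 - ev (h, x) * c) / 2 := by
      funext h
      rcases hev h x with h1 | h1 <;> rcases hc with h2 | h2 <;> norm_num [h1, h2]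
    rw [he, integral_div, integral_sub (integrable_const 1) ((int_ev x).mul_const c),
        integral_const, integral_mul_const]
    simp [mul_comm]
  -- the margin function
  set M : X × ℝ → ℝ := fun p => p.2 * ∫ h, ev (h, p.1) ∂Q with hM_def
  have hM_meas : Measurable M :=
    measurable_snd.mul (hf_sm.measurable.comp measurable_fst)
  have hM_bound : ∀ᵐ p ∂D, ‖M p‖ ≤ 1 := by
    filter_upwards [hD] with p hp
    have := hf_abs p.1
    rcases hp with h | h <;> simp [hM_def, h, norm_mul] <;> simpa using this
  have intM : Integrable M D :=
    (integrable_const (1 : ℝ)).mono' hM_meas.aestronglyMeasurable hM_bound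
  have intM2 : Integrable (fun p => M p ^ 2) D := by
    refine (integrable_const (1 : ℝ)).mono' ((hM_meas.pow_const 2).aestronglyMeasurable) ?_
    filter_upwards [hM_bound] with p hp
    have : |M p| ≤ 1 := by simpa using hp
    simp only [Real.norm_eq_abs, abs_pow]
    calc |M p| ^ 2 ≤ 1 ^ 2 := pow_le_pow_left₀ (abs_nonneg _) this 2
      _ = 1 := one_pow 2
  have intf2 : Integrable (fun p : X × ℝ => (∫ h, ev (h, p.1) ∂Q) ^ 2) D := by
    refine (integrable_const (1 : ℝ)).mono'
      (((hf_sm.measurable.comp measurable_fst).pow_const 2).aestronglyMeasurable) ?_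
    refine Filter.Eventually.of_forall fun p => ?_
    have := hf_abs p.1
    simp only [Real.norm_eq_abs, abs_pow]
    calc |∫ h, ev (h, p.1) ∂Q| ^ 2 ≤ 1 ^ 2 :=
          pow_le_pow_left₀ (abs_nonneg _) (by simpa using this) 2
      _ = 1 := one_pow 2
  -- Gibbs risk identity
  have hG : (∫ p, ∫ h, (if ev (h, p.1) ≠ p.2 then (1 : ℝ) else 0) ∂Q ∂D)
      = (1 - ∫ p, M p ∂D) / 2 := by
    have h1 : (∫ p, ∫ h, (if ev (h, p.1) ≠ p.2 then (1 : ℝ) else 0) ∂Q ∂D)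
        = ∫ p, (1 - M p) / 2 ∂D :=
      integral_congr_ae (hD.mono fun p hp => key p.1 p.2 hp)
    have i1 : Integrable (fun p => (1:ℝ) - M p) D := (integrable_const 1).sub intM
    rw [h1, integral_div, integral_sub (integrable_const 1) intM, integral_const]
    simp
  -- disagreement identity
  have key2 : ∀ x : X, (∫ h', ∫ h, (if ev (h, x) ≠ ev (h', x) then (1 : ℝ) else 0) ∂Q ∂Q)
      = (1 - (∫ h, ev (h, x) ∂Q) ^ 2) / 2 := by
    intro x
    have h1 : (fun h' => ∫ h, (if ev (h, x) ≠ ev (h', x) then (1 : ℝ) else 0) ∂Q)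
        = fun h' => (1 - ev (h', x) * ∫ h, ev (h, x) ∂Q) / 2 :=
      funext fun h' => key x (ev (h', x)) (hev h' x)
    rw [h1, integral_div,
        integral_sub (integrable_const 1) ((int_ev x).mul_const _),
        integral_const, integral_mul_const]
    simp [sq]
  have hDis : (∫ p, ∫ h', ∫ h, (if ev (h, p.1) ≠ ev (h', p.1) then (1 : ℝ) else 0) ∂Q ∂Q ∂D)
      = (1 - ∫ p, (∫ h, ev (h, p.1) ∂Q) ^ 2 ∂D) / 2 := by
    have h1 : (∫ p, ∫ h', ∫ h, (if ev (h, p.1) ≠ ev (h', p.1) then (1 : ℝ) else 0) ∂Q ∂Q ∂D)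
        = ∫ p, (1 - (∫ h, ev (h, p.1) ∂Q) ^ 2) / 2 ∂D :=
      integral_congr_ae (Filter.Eventually.of_forall fun p => key2 p.1)
    rw [h1, integral_div, integral_sub (integrable_const 1) intf2, integral_const]
    simp
  -- second moment of M equals ∫ f²
  have hM2 : (∫ p, M p ^ 2 ∂D) = ∫ p, (∫ h, ev (h, p.1) ∂Q) ^ 2 ∂D := by
    refine integral_congr_ae (hD.mono fun p hp => ?_)
    rcases hp with h | h <;> simp [hM_def, h, mul_pow]
  set μ := ∫ p, M p ∂D with hμ
  set S := ∫ p, (∫ h, ev (h, p.1) ∂Q) ^ 2 ∂D with hS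
  have hμpos : 0 < μ := by
    rw [hG] at hGibbs; linarith
  have hvar : μ ^ 2 ≤ S := by
    have := aux_sq_integral_le D M intM intM2
    rw [hM2, ← hμ] at this
    exact this
  have hSpos : 0 < S := lt_of_lt_of_le (pow_pos hμpos 2) hvar
  constructor
  · rw [hDis]; linarith
  · rw [hG, hDis]
    have e1 : 1 - 2 * ((1 - μ) / 2) = μ := by ring
    have e2 : 1 - 2 * ((1 - S) / 2) = S := by ring
    rw [e1, e2]
    exact aux_cantelli D M hM_meas intM intM2 μ S hμ.symm hM2 hμpos hSpos
end

section
/- Finite-ensemble C-bound: let h₁,…,h_K : X → {-1,+1} be classifiers, let q₁,…,q_K ≥ 0 with ∑_k q_k = 1 be weights, and let D be a probability measure on X × {-1,+1}. Define the weighted Gibbs risk r = ∫ ∑_{k=1}^K q_k · I[h_k(x) ≠ y] dD(x,y) and the weighted disagreement d = ∫ ∑_{k=1}^K ∑_{k'=1}^K q_k q_{k'} · I[h_k(x) ≠ h_{k'}(x)] dD(x,y). If r < 1/2, then d < 1/2 and the risk of the weighted majority vote, D{(x,y) : y·∑_{k=1}^K q_k h_k(x) ≤ 0}, is at most 1 -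 (1 - 2r)² / (1 - 2d). -/
open MeasureTheory

private lemma pm_indicator (a b : ℝ) (ha : a = 1 ∨ a = -1) (hb : b = 1 ∨ b = -1) :
    (if a ≠ b then (1:ℝ) else 0) = (1 - b * a) / 2 := by
  rcases ha with ha | ha <;> rcases hb with hb | hb <;> subst ha <;> subst hb <;> norm_num

/-- Finite-ensemble C-bound: for classifiers `h₁,…,h_K : X → {-1,+1}` and
nonnegative weights `q₁,…,q_K` summing to `1`, if the weighted Gibbs risk
`r = ∫ ∑ₖ qₖ I[hₖ(x) ≠ y] dD` is `< 1/2`, then the weighted disagreement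
`d = ∫ ∑ₖ ∑ₖ' qₖ qₖ' I[hₖ(x) ≠ hₖ'(x)] dD` is `< 1/2` and the risk of the
weighted majority vote is at most `1 - (1 - 2r)² / (1 - 2d)`. -/
theorem finite_ensemble_cBound {X : Type*} [MeasurableSpace X]
    (D : Measure (X × ℝ)) [IsProbabilityMeasure D]
    (hD : ∀ᵐ p ∂D, p.2 = 1 ∨ p.2 = -1)
    (K : ℕ) (h : Fin K → X → ℝ)
    (hmeas : ∀ k, Measurable (h k))
    (hval : ∀ k x, h k x = 1 ∨ h k x = -1)
    (q : Fin K → ℝ) (hq : ∀ k, 0 ≤ q k) (hqsum : ∑ k, q k = 1)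
    (hr : ∫ p, ∑ k, q k * (if h k p.1 ≠ p.2 then (1 : ℝ) else 0) ∂D < 1 / 2) :
    ∫ p, ∑ k, ∑ k', q k * q k' * (if h k p.1 ≠ h k' p.1 then (1 : ℝ) else 0) ∂D < 1 / 2 ∧
    (D {p | p.2 * ∑ k, q k * h k p.1 ≤ 0}).toReal ≤
      1 - (1 - 2 * ∫ p, ∑ k, q k * (if h k p.1 ≠ p.2 then (1 : ℝ) else 0) ∂D) ^ 2 /
        (1 - 2 * ∫ p, ∑ k, ∑ k', q k * q k' * (if h k p.1 ≠ h k' p.1 then (1 : ℝ) else 0) ∂D) := by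
  -- the margin function
  set φ : X → ℝ := fun x => ∑ k, q k * h k x with hφdef
  set f : X × ℝ → ℝ := fun p => p.2 * φ p.1 with hfdef
  have hφmeas : Measurable φ := by
    exact Finset.measurable_sum _ fun k _ => (measurable_const.mul (hmeas k))
  have hfmeas : Measurable f := measurable_snd.mul (hφmeas.comp measurable_fst)
  have hφbd : ∀ x, |φ x| ≤ 1 := by
    intro x
    calc |φ x| ≤ ∑ k, |q k * h k x| := Finset.abs_sum_le_sum_abs _ _
    _ = ∑ k, q k := by
        refine Finset.sum_congr rfl fun k _ => ?_
        rw [abs_mul, abs_of_nonneg (hq k)]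
        rcases hval k x with hv | hv <;> simp [hv]
    _ = 1 := hqsum
  have hfbd : ∀ᵐ p ∂D, ‖f p‖ ≤ 1 := by
    filter_upwards [hD] with p hp
    rw [Real.norm_eq_abs, hfdef]
    simp only [abs_mul]
    rcases hp with hp | hp <;> rw [hp] <;> simpa using hφbd p.1
  have hfint : Integrable f D :=
    memLp_one_iff_integrable.mp (MemLp.of_bound hfmeas.aestronglyMeasurable 1 hfbd)
  set μ₁ : ℝ := ∫ p, f p ∂D with hμ₁
  set μ₂ : ℝ := ∫ p, φ p.1 ^ 2 ∂D with hμ₂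
  have hφsqmeas : Measurable fun p : X × ℝ => φ p.1 ^ 2 :=
    (hφmeas.comp measurable_fst).pow_const 2
  have hφsqbd : ∀ p : X × ℝ, ‖φ p.1 ^ 2‖ ≤ 1 := by
    intro p
    rw [Real.norm_eq_abs, abs_pow]
    calc |φ p.1| ^ 2 ≤ 1 ^ 2 := by
          exact pow_le_pow_left₀ (abs_nonneg _) (hφbd p.1) 2
    _ = 1 := one_pow 2
  have hφsqint : Integrable (fun p : X × ℝ => φ p.1 ^ 2) D :=
    memLp_one_iff_integrable.mp (MemLp.of_bound hφsqmeas.aestronglyMeasurable 1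
      (Filter.Eventually.of_forall hφsqbd))
  -- Gibbs risk identity
  have hr1 : ∫ p, ∑ k, q k * (if h k p.1 ≠ p.2 then (1 : ℝ) else 0) ∂D = (1 - μ₁) / 2 := by
    have hcongr : ∀ᵐ p ∂D, ∑ k, q k * (if h k p.1 ≠ p.2 then (1 : ℝ) else 0) = (1 - f p) / 2 := by
      filter_upwards [hD] with p hp
      have : ∀ k, q k * (if h k p.1 ≠ p.2 then (1 : ℝ) else 0)
          = (q k - q k * (p.2 * h k p.1)) / 2 := by
        intro k
        rw [pm_indicator _ _ (hval k p.1) hp]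
        ring
      rw [Finset.sum_congr rfl fun k _ => this k, ← Finset.sum_div, Finset.sum_sub_distrib, hqsum]
      have : ∑ k, q k * (p.2 * h k p.1) = f p := by
        rw [hfdef, hφdef]
        simp only [Finset.mul_sum]
        exact Finset.sum_congr rfl fun k _ => by ring
      rw [this]
    rw [integral_congr_ae hcongr, integral_div, integral_sub (integrable_const 1) hfint]
    simp [hμ₁]
  -- disagreement identity
  have hd1 : ∫ p, ∑ k, ∑ k', q k * q k' * (if h k p.1 ≠ h k' p.1 then (1 : ℝ) else 0) ∂D
      = (1 - μ₂) / 2 := by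
    have hcongr : ∀ p : X × ℝ, ∑ k, ∑ k', q k * q k' * (if h k p.1 ≠ h k' p.1 then (1 : ℝ) else 0)
        = (1 - φ p.1 ^ 2) / 2 := by
      intro p
      have hterm : ∀ k k', q k * q k' * (if h k p.1 ≠ h k' p.1 then (1 : ℝ) else 0)
          = (q k * q k' - (q k * h k p.1) * (q k' * h k' p.1)) / 2 := by
        intro k k'
        rw [pm_indicator _ _ (hval k p.1) (hval k' p.1)]
        ring
      calc ∑ k, ∑ k', q k * q k' * (if h k p.1 ≠ h k' p.1 then (1 : ℝ) else 0)
          = ∑ k, ∑ k', (q k * q k' - (q k * h k p.1) * (q k' * h k' p.1)) / 2 := by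
            exact Finset.sum_congr rfl fun k _ => Finset.sum_congr rfl fun k' _ => hterm k k'
        _ = ((∑ k, ∑ k', q k * q k') - ∑ k, ∑ k', (q k * h k p.1) * (q k' * h k' p.1)) / 2 := by
            simp only [← Finset.sum_div, Finset.sum_sub_distrib]
        _ = (1 - φ p.1 ^ 2) / 2 := by
            rw [← Finset.sum_mul_sum, ← Finset.sum_mul_sum, hqsum, one_mul, hφdef]
            ring_nf
    rw [integral_congr_ae (Filter.Eventually.of_forall (fun p => hcongr p)), integral_div,
      integral_sub (integrable_const 1) hφsqint]
    simp [hμ₂]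
  -- positivity of μ₁
  have hμ₁pos : 0 < μ₁ := by
    rw [hr1] at hr; linarith
  -- Cauchy–Schwarz step
  set A : Set (X × ℝ) := {p | 0 < f p} with hA
  have hAmeas : MeasurableSet A := measurableSet_lt measurable_const hfmeas
  set fp : X × ℝ → ℝ := fun p => max (f p) 0 with hfp
  have hfpmeas : Measurable fp := hfmeas.max measurable_const
  have hfpnonneg : ∀ p, 0 ≤ fp p := fun p => le_max_right _ _
  set g : X × ℝ → ℝ := A.indicator (fun _ => (1:ℝ)) with hg
  have hgmeas : Measurable g := measurable_const.indicator hAmeas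
  have hgnonneg : ∀ p, 0 ≤ g p := fun p => Set.indicator_nonneg (fun _ _ => zero_le_one) p
  have hgbd : ∀ p, ‖g p‖ ≤ 1 := by
    intro p
    rw [Real.norm_eq_abs]
    by_cases hp : p ∈ A <;> simp [hg, Set.indicator_apply, hp]
  have hfpbd : ∀ᵐ p ∂D, ‖fp p‖ ≤ 1 := by
    filter_upwards [hfbd] with p hp
    rw [Real.norm_eq_abs] at hp ⊢
    rw [abs_le] at hp ⊢
    constructor <;> [linarith [hfpnonneg p]; exact max_le hp.2 zero_le_one]
  have hfpmem : MemLp fp (ENNReal.ofReal 2) D :=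
    MemLp.of_bound hfpmeas.aestronglyMeasurable 1 hfpbd
  have hgmem : MemLp g (ENNReal.ofReal 2) D :=
    MemLp.of_bound hgmeas.aestronglyMeasurable 1 (Filter.Eventually.of_forall hgbd)
  have hfpint : Integrable fp D :=
    memLp_one_iff_integrable.mp (MemLp.of_bound hfpmeas.aestronglyMeasurable 1 hfpbd)
  -- μ₁ ≤ ∫ fp * g
  have hstep1 : μ₁ ≤ ∫ p, fp p * g p ∂D := by
    have heq : ∀ p, fp p * g p = fp p := by
      intro p
      by_cases hp : p ∈ A
      · simp [hg, Set.indicator_apply, hp]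
      · have : f p ≤ 0 := le_of_not_gt hp
        simp [hfp, hg, Set.indicator_apply, hp, max_eq_right this]
    rw [integral_congr_ae (Filter.Eventually.of_forall (fun p => heq p))]
    exact integral_mono hfint hfpint fun p => le_max_left _ _
  -- Hölder
  have hCS : ∫ p, fp p * g p ∂D
      ≤ (∫ p, fp p ^ (2:ℝ) ∂D) ^ (1/2 : ℝ) * (∫ p, g p ^ (2:ℝ) ∂D) ^ (1/2 : ℝ) := by
    exact integral_mul_le_Lp_mul_Lq_of_nonneg (Real.holderConjugate_iff_eq_conjExponent (by norm_num) |>.mpr (by norm_num))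
      (Filter.Eventually.of_forall hfpnonneg) (Filter.Eventually.of_forall hgnonneg) hfpmem hgmem
  -- the two factors
  set a : ℝ := (D {p : X × ℝ | p.2 * ∑ k, q k * h k p.1 ≤ 0}).toReal with ha
  have hSmeas : MeasurableSet {p : X × ℝ | p.2 * ∑ k, q k * h k p.1 ≤ 0} :=
    measurableSet_le hfmeas measurable_const
  have hacompl : A = {p : X × ℝ | p.2 * ∑ k, q k * h k p.1 ≤ 0}ᶜ := by
    ext p; simp [hA, hfdef, hφdef, not_le]
  have ha01 : 0 ≤ a ∧ a ≤ 1 := by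
    constructor
    · exact ENNReal.toReal_nonneg
    · rw [ha]
      exact ENNReal.toReal_le_of_le_ofReal zero_le_one (by simpa using prob_le_one)
  have hgint : ∫ p, g p ^ (2:ℝ) ∂D = 1 - a := by
    have : ∀ p, g p ^ (2:ℝ) = g p := by
      intro p
      by_cases hp : p ∈ A <;> simp [hg, Set.indicator_apply, hp, Real.rpow_natCast]
    rw [integral_congr_ae (Filter.Eventually.of_forall (fun p => this p)), hg, integral_indicator_const _ hAmeas, hacompl,
      Measure.real, prob_compl_eq_one_sub hSmeas, ENNReal.toReal_sub_of_le prob_le_one ENNReal.one_ne_top]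
    simp [ha]
  have hrpow : ∀ p, fp p ^ (2:ℝ) = fp p ^ (2:ℕ) := fun p => by
    rw [← Real.rpow_natCast (fp p) 2]; norm_num
  have hfpsq : ∫ p, fp p ^ (2:ℝ) ∂D ≤ μ₂ := by
    rw [integral_congr_ae (Filter.Eventually.of_forall hrpow)]
    refine integral_mono_ae ?_ hφsqint ?_
    · refine memLp_one_iff_integrable.mp (MemLp.of_bound
        ((hfpmeas.pow_const 2).aestronglyMeasurable) 1 ?_)
      filter_upwards [hfpbd] with p hp
      rw [Real.norm_eq_abs, abs_pow]
      calc |fp p| ^ 2 ≤ 1 ^ 2 := by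
            exact pow_le_pow_left₀ (abs_nonneg _) (by rwa [Real.norm_eq_abs] at hp) 2
        _ = 1 := one_pow 2
    · filter_upwards [hD] with p hp
      have h3 : fp p ≤ |f p| := max_le (le_abs_self _) (abs_nonneg _)
      have h2 : fp p ^ 2 ≤ f p ^ 2 := by
        calc fp p ^ 2 ≤ |f p| ^ 2 := pow_le_pow_left₀ (hfpnonneg p) h3 2
          _ = f p ^ 2 := sq_abs _
      refine h2.trans ?_
      have h4 : f p ^ 2 = p.2 ^ 2 * φ p.1 ^ 2 := by
        show (p.2 * φ p.1) ^ 2 = _; ring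
      rw [h4]
      rcases hp with hp | hp <;> rw [hp] <;> norm_num
  obtain ⟨ha0, ha1⟩ := ha01
  have h1a : (0:ℝ) ≤ 1 - a := by linarith
  have hI2nonneg : 0 ≤ ∫ p, fp p ^ (2:ℝ) ∂D :=
    integral_nonneg fun p => Real.rpow_nonneg (hfpnonneg p) _
  have key : μ₁ ^ 2 ≤ μ₂ * (1 - a) := by
    have h5 : μ₁ ≤ (∫ p, fp p ^ (2:ℝ) ∂D) ^ (1/2 : ℝ) * (1 - a) ^ (1/2 : ℝ) :=
      hstep1.trans (hCS.trans_eq (by rw [hgint]))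
    have h6 : ((∫ p, fp p ^ (2:ℝ) ∂D) ^ (1/2:ℝ) * (1 - a) ^ (1/2:ℝ)) ^ 2
        = (∫ p, fp p ^ (2:ℝ) ∂D) * (1 - a) := by
      rw [mul_pow, ← Real.rpow_natCast ((∫ p, fp p ^ (2:ℝ) ∂D) ^ (1/2:ℝ)) 2,
        ← Real.rpow_natCast ((1 - a) ^ (1/2:ℝ)) 2,
        ← Real.rpow_mul hI2nonneg, ← Real.rpow_mul h1a]
      norm_num
    calc μ₁ ^ 2 ≤ ((∫ p, fp p ^ (2:ℝ) ∂D) ^ (1/2:ℝ) * (1 - a) ^ (1/2:ℝ)) ^ 2 :=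
          pow_le_pow_left₀ hμ₁pos.le h5 2
      _ = (∫ p, fp p ^ (2:ℝ) ∂D) * (1 - a) := h6
      _ ≤ μ₂ * (1 - a) := mul_le_mul_of_nonneg_right hfpsq h1a
  have hμ₂nonneg : 0 ≤ μ₂ := integral_nonneg fun p => sq_nonneg _
  have hμ₂pos : 0 < μ₂ := by
    have h7 : μ₂ * (1 - a) ≤ μ₂ := mul_le_of_le_one_right hμ₂nonneg (by linarith)
    nlinarith [sq_nonneg μ₁]
  constructor
  · rw [hd1]; linarith
  · rw [hr1, hd1]
    have e1 : 1 - 2 * ((1 - μ₁) / 2) = μ₁ := by ring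
    have e2 : 1 - 2 * ((1 - μ₂) / 2) = μ₂ := by ring
    rw [e1, e2]
    have h8 : μ₁ ^ 2 / μ₂ ≤ 1 - a := (div_le_iff₀ hμ₂pos).mpr (by linarith [key])
    linarith
end
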